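/- If in a feasible single-machine schedule S a set K of jobs is processed consecutively without idle time, the first job of K starts exactly at time min_{i∈K} r_i, all jobs of K have due date at most d_o where o is the last job of K and o attains the maximum lateness of S, and the jobs of K appear in nondecreasing order of due dates, then S has minimum possible maximum lateness among all feasible schedules. -/

import Mathlib

/-- Completion time of the last job of a consecutively-processed chain. -/
lemma chain_last_eq {n : ℕ} (p s : Fin n → ℤ) :
    ∀ (L : List (Fin n)) (hLne : L ≠ []),
      L.Chain' (fun a b => s b = s a + p a) →
      s (L.getLast hLne) + p (L.getLast hLne) = s (L.head hLne) + (L.map p).sum := by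
  intro L
  induction L with
  | nil => intro h; exact absurd rfl h
  | cons a t ih =>
    intro _ hch
    cases t with
    | nil => simp
    | cons b t' =>
      have hch' : (b :: t').Chain' (fun a b => s b = s a + p a) := hch.tail
      have hab : s b = s a + p a := (List.isChain_cons_cons.mp hch).1
      have := ih (by simp) hch'
      have hlast : (a :: b :: t').getLast (by simp) = (b :: t').getLast (by simp) := by
        simp [List.getLast_cons]
      rw [hlast]
      simp only [List.head_cons] at this ⊢
      rw [this, hab]
      simp [List.map_cons]
      ring
  
/-- In any feasible schedule, some job of K finishes no earlier than
min release time plus total processing time. -/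
lemma lower_bound {n : ℕ} (r p s' : Fin n → ℤ) (hp : ∀ j, 0 < p j)
    (hrel : ∀ j, r j ≤ s' j)
    (hnov : ∀ i j, i ≠ j → s' i + p i ≤ s' j ∨ s' j + p j ≤ s' i) :
    ∀ (K : Finset (Fin n)) (hK : K.Nonempty),
      ∃ u ∈ K, K.inf' hK r + ∑ i ∈ K, p i ≤ s' u + p u := by
  intro K
  induction K using Finset.strongInduction with
  | _ K ih =>
    intro hK
    obtain ⟨u, hu, humax⟩ := K.exists_max_image (fun j => s' j + p j) hK
    refine ⟨u, hu, ?_⟩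
    by_cases hsing : K \ {u} = ∅
    · have hKu : K = {u} := by
        apply Finset.eq_singleton_iff_nonempty_unique_mem.mpr
        refine ⟨hK, fun x hx => ?_⟩
        by_contra hxu
        have hxm : x ∈ K \ {u} := Finset.mem_sdiff.mpr ⟨hx, by simp [hxu]⟩
        rw [hsing] at hxm
        exact absurd hxm (Finset.notMem_empty x)
      subst hKu
      simp only [Finset.inf'_singleton, Finset.sum_singleton]
      exact add_le_add_left (hrel u) _
    · have hK' : (K \ {u}).Nonempty := Finset.nonempty_iff_ne_empty.mpr hsing
      have hsub : K \ {u} ⊂ K := by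
        refine Finset.sdiff_ssubset ?_ ?_ <;> simp [hu]
      obtain ⟨v, hv, hvle⟩ := ih _ hsub hK'
      have hvK : v ∈ K := (Finset.mem_sdiff.mp hv).1
      have hvu : v ≠ u := by simpa using (Finset.mem_sdiff.mp hv).2
      -- v finishes before u starts
      have hvbefore : s' v + p v ≤ s' u := by
        rcases hnov v u hvu with h | h
        · exact h
        · exfalso
          have h1 : s' v + p v ≤ s' u + p u := humax v hvK
          have := hp v
          omega
      have hinf : K.inf' hK r ≤ (K \ {u}).inf' hK' r := by
        apply Finset.le_inf'
        intro b hb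
        exact Finset.inf'_le _ (Finset.mem_sdiff.mp hb).1
      have hsum : ∑ i ∈ K, p i = (∑ i ∈ K \ {u}, p i) + p u := by
        rw [Finset.sum_sdiff_eq_sub (by simp [hu]), Finset.sum_singleton]
        ring
      have h2 : (K \ {u}).inf' hK' r + ∑ i ∈ K \ {u}, p i ≤ s' u := le_trans hvle hvbefore
      omega

/-- If in a feasible single-machine schedule `S` a set `K` of jobs is
processed consecutively without idle time, the first job of `K` starts exactly at
`min_{i∈K} r i`, all jobs of `K` have due date at most `d o` where `o` is the last
job of `K` and `o` attains the maximum lateness of `S`, and the jobs of `K` appear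
in nondecreasing order of due dates, then `S` has minimum possible maximum lateness
among all feasible schedules. -/
theorem stmt_2 (n : ℕ) (r p d s : Fin n → ℤ) (hp : ∀ j, 0 < p j)
    (hrel : ∀ j, r j ≤ s j)
    (hnov : ∀ i j, i ≠ j → s i + p i ≤ s j ∨ s j + p j ≤ s i)
    -- the jobs of K, listed in processing order
    (L : List (Fin n)) (hLne : L ≠ []) (hnd : L.Nodup)
    (K : Finset (Fin n)) (hKL : K = L.toFinset) (hK : K.Nonempty)
    -- consecutive processing without idle time
    (hconsec : L.Chain' (fun a b => s b = s a + p a))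
    -- no other job runs in between
    (hbetween : ∀ j, j ∉ K → ∀ a ∈ K, s j + p j ≤ s a ∨ s a + p a ≤ s j)
    -- the first job of K starts exactly at min_{i∈K} r i
    (hstart : s (L.head hLne) = K.inf' hK r)
    -- o is the last job of K
    (o : Fin n) (ho : o = L.getLast hLne)
    -- all jobs of K have due date at most d o
    (hdue : ∀ i ∈ K, d i ≤ d o)
    -- o attains the maximum lateness of S
    (hmax : ∀ j, s j + p j - d j ≤ s o + p o - d o)
    -- the jobs of K appear in nondecreasing order of due dates
    (hsorted : L.Chain' (fun a b => d a ≤ d b)) :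
    ∀ s' : Fin n → ℤ, (∀ j, r j ≤ s' j) →
      (∀ i j, i ≠ j → s' i + p i ≤ s' j ∨ s' j + p j ≤ s' i) →
      Finset.univ.sup' ⟨o, Finset.mem_univ _⟩ (fun j => s j + p j - d j) ≤
        Finset.univ.sup' ⟨o, Finset.mem_univ _⟩ (fun j => s' j + p j - d j) := by
  intro s' hrel' hnov'
  -- max lateness of S is s o + p o - d o
  have hsupS : Finset.univ.sup' ⟨o, Finset.mem_univ _⟩ (fun j => s j + p j - d j)
      = s o + p o - d o := by
    apply le_antisymm
    · exact Finset.sup'_le _ (fun j => s j + p j - d j) (fun j _ => hmax j)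
    · exact Finset.le_sup' (fun j => s j + p j - d j) (Finset.mem_univ o)
  rw [hsupS]
  -- completion time of o in S
  have hcomp : s o + p o = K.inf' hK r + ∑ i ∈ K, p i := by
    have h1 := chain_last_eq p s L hLne hconsec
    rw [← ho] at h1
    have hsum : (L.map p).sum = ∑ i ∈ K, p i := by
      rw [hKL, List.sum_toFinset _ hnd]
    rw [h1, hstart, hsum]
  obtain ⟨u, hu, hule⟩ := lower_bound r p s' hp hrel' hnov' K hK
  have hdu : d u ≤ d o := hdue u hu
  have hlate : s o + p o - d o ≤ s' u + p u - d u := by omega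
  refine le_trans hlate ?_
  exact Finset.le_sup' (fun j => s' j + p j - d j) (Finset.mem_univ u)
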